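/- Let T > 0 and c ∈ ℝ with 0 < |c| < T²/4. For y ∈ ℝ with |y| ≥ T/2, define f_y : [0,T] → ℝ by f_y(x) = y − sgn(y)·√((x − T/2)² + y² − T²/4). Then there exists a unique y_C ∈ ℝ with |y_C| ≥ T/2 such that ∫₀^T f_{y_C}(x) dx = c; moreover this y_C satisfies |y_C| > T/2 and sgn(y_C) = sgn(c), and f_{y_C} is Lipschitz with Lipschitz constant strictly less than 1. -/

import Mathlib

open MeasureTheory Set

/-- The hyperbola-arc function with vertex ordinate `y`, joining `(0,0)` to `(T,0)`. -/
noncomputable def hyperbolaFun (T y : ℝ) (x : ℝ) : ℝ :=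
  y - Real.sign y * Real.sqrt ((x - T/2)^2 + y^2 - T^2/4)

namespace HypAux

/-- area for positive `y` (no sign) -/
noncomputable def g (T y : ℝ) : ℝ :=
  ∫ x in (0:ℝ)..T, (y - Real.sqrt ((x - T/2)^2 + y^2 - T^2/4))

lemma contIntegrand (T y : ℝ) :
    Continuous fun x => y - Real.sqrt ((x - T/2)^2 + y^2 - T^2/4) := by
  fun_prop

lemma integrable (T y a b : ℝ) :
    IntervalIntegrable (fun x => y - Real.sqrt ((x - T/2)^2 + y^2 - T^2/4)) volume a b :=
  (contIntegrand T y).intervalIntegrable a b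

lemma g_cont (T : ℝ) : Continuous (g T) := by
  have h : Continuous
      (Function.uncurry fun y x : ℝ => y - Real.sqrt ((x - T/2)^2 + y^2 - T^2/4)) := by
    fun_prop
  exact intervalIntegral.continuous_parametric_intervalIntegral_of_continuous' h 0 T

lemma sq_le {T x : ℝ} (hx : x ∈ Icc 0 T) : (x - T/2)^2 ≤ T^2/4 := by
  obtain ⟨h0, h1⟩ := hx; nlinarith

lemma sq_lt {T x : ℝ} (hx : x ∈ Ioo 0 T) : (x - T/2)^2 < T^2/4 := by
  obtain ⟨h0, h1⟩ := hx; nlinarith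

lemma sqrt_lt_self {T y x : ℝ} (hT : 0 < T) (hy : T/2 ≤ y) (hx : x ∈ Ioo 0 T) :
    Real.sqrt ((x - T/2)^2 + y^2 - T^2/4) < y := by
  have h0 : 0 < y := lt_of_lt_of_le (by linarith) hy
  rw [Real.sqrt_lt' h0]
  have := sq_lt hx
  nlinarith

lemma sqrt_le_self {T y x : ℝ} (hT : 0 < T) (hy : T/2 ≤ y) (hx : x ∈ Icc 0 T) :
    Real.sqrt ((x - T/2)^2 + y^2 - T^2/4) ≤ y := by
  have h0 : 0 ≤ y := by linarith
  have h := sq_le hx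
  calc Real.sqrt ((x - T/2)^2 + y^2 - T^2/4) ≤ Real.sqrt (y^2) :=
        Real.sqrt_le_sqrt (by nlinarith)
    _ = y := by rw [Real.sqrt_sq h0]

lemma g_pos {T y : ℝ} (hT : 0 < T) (hy : T/2 ≤ y) : 0 < g T y := by
  apply intervalIntegral.intervalIntegral_pos_of_pos_on (integrable T y 0 T) _ hT
  intro x hx
  have := sqrt_lt_self hT hy hx
  linarith

lemma g_strictAntiOn {T : ℝ} (hT : 0 < T) : StrictAntiOn (g T) (Ici (T/2)) := by
  intro y1 h1 y2 h2 h12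
  rw [mem_Ici] at h1 h2
  have key : 0 < g T y1 - g T y2 := by
    have hsub : g T y1 - g T y2 = ∫ x in (0:ℝ)..T,
        ((y1 - Real.sqrt ((x - T/2)^2 + y1^2 - T^2/4)) -
         (y2 - Real.sqrt ((x - T/2)^2 + y2^2 - T^2/4))) :=
      (intervalIntegral.integral_sub (integrable T y1 0 T) (integrable T y2 0 T)).symm
    rw [hsub]
    apply intervalIntegral.intervalIntegral_pos_of_pos_on
      ((integrable T y1 0 T).sub (integrable T y2 0 T)) _ hT
    intro x hx
    set S1 := Real.sqrt ((x - T/2)^2 + y1^2 - T^2/4) with hS1def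
    set S2 := Real.sqrt ((x - T/2)^2 + y2^2 - T^2/4) with hS2def
    have hxIcc : x ∈ Icc 0 T := ⟨hx.1.le, hx.2.le⟩
    have hA1 : (0:ℝ) ≤ (x - T/2)^2 + y1^2 - T^2/4 := by nlinarith [sq_nonneg (x - T/2)]
    have hA2 : (0:ℝ) < (x - T/2)^2 + y2^2 - T^2/4 := by nlinarith [sq_nonneg (x - T/2)]
    have hS1lt : S1 < y1 := sqrt_lt_self hT h1 hx
    have hS2le : S2 ≤ y2 := sqrt_le_self hT (by linarith) hxIcc
    have hS1nn : 0 ≤ S1 := Real.sqrt_nonneg _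
    have hS2pos : 0 < S2 := Real.sqrt_pos.mpr hA2
    have hS1sq : S1^2 = (x - T/2)^2 + y1^2 - T^2/4 := Real.sq_sqrt hA1
    have hS2sq : S2^2 = (x - T/2)^2 + y2^2 - T^2/4 := Real.sq_sqrt hA2.le
    have hsum : 0 < S1 + S2 := by linarith
    have hdiff : (S2 - S1) * (S1 + S2) = (y2 - y1) * (y1 + y2) := by
      linear_combination hS2sq - hS1sq
    have h5 : (y2 - y1) * (S1 + S2) < (S2 - S1) * (S1 + S2) := by
      rw [hdiff]
      have : S1 + S2 < y1 + y2 := by linarith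
      nlinarith
    have h6 : y2 - y1 < S2 - S1 := lt_of_mul_lt_mul_right h5 hsum.le
    linarith
  linarith

lemma g_le {T y : ℝ} (hT : 0 < T) (hy : T/2 ≤ y) : g T y ≤ T * (T^2/(4*y)) := by
  have hy0 : 0 < y := by linarith
  have pt : ∀ x ∈ Icc (0:ℝ) T,
      y - Real.sqrt ((x - T/2)^2 + y^2 - T^2/4) ≤ T^2/(4*y) := by
    intro x hx
    have h1 : Real.sqrt (y^2 - T^2/4) ≤ Real.sqrt ((x - T/2)^2 + y^2 - T^2/4) :=
      Real.sqrt_le_sqrt (by nlinarith [sq_nonneg (x - T/2)])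
    have h2 : y - T^2/(4*y) ≤ Real.sqrt (y^2 - T^2/4) := by
      rcases le_or_gt (y - T^2/(4*y)) 0 with h | h
      · exact h.trans (Real.sqrt_nonneg _)
      · rw [Real.le_sqrt' h]
        set q := T^2/(4*y) with hqdef
        have hq : 4*y*q = T^2 := by rw [hqdef]; field_simp
        have hq0 : 0 ≤ q := by positivity
        have hqle : q ≤ T/2 := by
          rw [hqdef, div_le_iff₀ (by positivity)]
          nlinarith
        nlinarith
    linarith
  calc g T y ≤ ∫ _x in (0:ℝ)..T, T^2/(4*y) :=
        intervalIntegral.integral_mono_on hT.le (integrable T y 0 T)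
          (intervalIntegrable_const) pt
    _ = T * (T^2/(4*y)) := by
        rw [intervalIntegral.integral_const, smul_eq_mul]; ring

lemma g_half {T : ℝ} (hT : 0 < T) : g T (T/2) = T^2/4 := by
  have key : g T (T/2) = (∫ x in (0:ℝ)..(T/2), x) + ∫ x in (T/2)..T, (T - x) := by
    rw [g, ← intervalIntegral.integral_add_adjacent_intervals
      (integrable T (T/2) 0 (T/2)) (integrable T (T/2) (T/2) T)]
    congr 1
    · apply intervalIntegral.integral_congr
      intro x hx
      rw [uIcc_of_le (by linarith : (0:ℝ) ≤ T/2)] at hx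
      show T/2 - Real.sqrt ((x - T/2)^2 + (T/2)^2 - T^2/4) = x
      have h1 : (x - T/2)^2 + (T/2)^2 - T^2/4 = (x - T/2)^2 := by ring
      rw [h1, Real.sqrt_sq_eq_abs, abs_of_nonpos (by linarith [hx.2])]
      ring
    · apply intervalIntegral.integral_congr
      intro x hx
      rw [uIcc_of_le (by linarith : T/2 ≤ T)] at hx
      show T/2 - Real.sqrt ((x - T/2)^2 + (T/2)^2 - T^2/4) = T - x
      have h1 : (x - T/2)^2 + (T/2)^2 - T^2/4 = (x - T/2)^2 := by ring
      rw [h1, Real.sqrt_sq_eq_abs, abs_of_nonneg (by linarith [hx.1])]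
      ring
  rw [key, integral_id]
  have h2 : (∫ x in (T/2)..T, (T - x)) = (T - T/2) * T - (T^2 - (T/2)^2)/2 := by
    rw [intervalIntegral.integral_sub intervalIntegrable_const
      (intervalIntegral.intervalIntegrable_id), integral_id,
      intervalIntegral.integral_const, smul_eq_mul]
  rw [h2]; ring

lemma pos_case {T c : ℝ} (hT : 0 < T) (hc0 : 0 < c) (hc : c < T^2/4) :
    ∃ yC, T/2 < yC ∧ g T yC = c ∧ ∀ y, T/2 ≤ y → g T y = c → y = yC := by
  set Y := max (T/2) (T^3/(4*c)) + 1 with hYdef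
  have hm1 : T/2 ≤ max (T/2) (T^3/(4*c)) := le_max_left _ _
  have hm2 : T^3/(4*c) ≤ max (T/2) (T^3/(4*c)) := le_max_right _ _
  have hY1 : T/2 ≤ Y := by rw [hYdef]; linarith
  have hY2 : T^3/(4*c) < Y := by rw [hYdef]; linarith
  have hYpos : 0 < Y := lt_of_lt_of_le (by linarith) hY1
  have hgY : g T Y < c := by
    have h1 := g_le hT hY1
    have h3 : T^3 < 4*c*Y := by
      have := (div_lt_iff₀ (by positivity : (0:ℝ) < 4*c)).mp hY2
      linarith
    have h2 : T * (T^2/(4*Y)) < c := by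
      calc T * (T^2/(4*Y)) = T^3/(4*Y) := by ring
        _ < c := (div_lt_iff₀ (by positivity)).mpr (by linarith)
    linarith
  have hcont : ContinuousOn (g T) (Icc (T/2) Y) := (g_cont T).continuousOn
  have hmem : c ∈ Icc (g T Y) (g T (T/2)) := ⟨hgY.le, by rw [g_half hT]; exact hc.le⟩
  obtain ⟨y, hy, hgy⟩ := intermediate_value_Icc' hY1 hcont hmem
  have hylt : T/2 < y := by
    rcases eq_or_lt_of_le hy.1 with h | h
    · exfalso
      rw [← h, g_half hT] at hgy
      linarith
    · exact h
  refine ⟨y, hylt, hgy, ?_⟩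
  intro y' hy' hgy'
  exact (g_strictAntiOn hT).injOn (mem_Ici.mpr hy') (mem_Ici.mpr hylt.le)
    (hgy'.trans hgy.symm)

lemma integral_hyp_pos {T y : ℝ} (hy : 0 < y) :
    (∫ x in (0:ℝ)..T, hyperbolaFun T y x) = g T y := by
  rw [g]
  congr 1
  funext x
  simp [hyperbolaFun, Real.sign_of_pos hy]

lemma hyp_neg (T y : ℝ) : hyperbolaFun T (-y) = fun x => -hyperbolaFun T y x := by
  funext x
  simp only [hyperbolaFun, Real.sign_neg, neg_sq]
  ring

lemma integral_hyp_neg {T y : ℝ} (hy : y < 0) :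
    (∫ x in (0:ℝ)..T, hyperbolaFun T y x) = - g T (-y) := by
  have h : hyperbolaFun T y = fun x => -hyperbolaFun T (-y) x := by
    have := hyp_neg T (-y)
    rwa [neg_neg] at this
  rw [h, intervalIntegral.integral_neg, integral_hyp_pos (by linarith : 0 < -y)]

lemma sqrt_lip {T y x1 x2 : ℝ} (hT : 0 < T) (hy : T/2 < y)
    (h1 : x1 ∈ Icc 0 T) (h2 : x2 ∈ Icc 0 T) :
    |Real.sqrt ((x1 - T/2)^2 + y^2 - T^2/4) - Real.sqrt ((x2 - T/2)^2 + y^2 - T^2/4)|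
      ≤ T/(2*y) * |x1 - x2| := by
  have hy0 : 0 < y := by linarith
  set K := T/(2*y) with hKdef
  have hKpos : 0 < K := by positivity
  set A1 := (x1 - T/2)^2 + y^2 - T^2/4 with hA1def
  set A2 := (x2 - T/2)^2 + y^2 - T^2/4 with hA2def
  have hA1 : 0 < A1 := by rw [hA1def]; nlinarith [sq_nonneg (x1 - T/2)]
  have hA2 : 0 < A2 := by rw [hA2def]; nlinarith [sq_nonneg (x2 - T/2)]
  set S1 := Real.sqrt A1 with hS1def
  set S2 := Real.sqrt A2 with hS2def
  have hS1 : 0 < S1 := Real.sqrt_pos.mpr hA1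
  have hS2 : 0 < S2 := Real.sqrt_pos.mpr hA2
  have hS1sq : S1^2 = A1 := Real.sq_sqrt hA1.le
  have hS2sq : S2^2 = A2 := Real.sq_sqrt hA2.le
  have key : ∀ x : ℝ, x ∈ Icc 0 T → ∀ A : ℝ, A = (x - T/2)^2 + y^2 - T^2/4 →
      |x - T/2| ≤ K * Real.sqrt A := by
    intro x hx A hA
    have hs := sq_le (T := T) hx
    have hAnn : 0 ≤ A := by nlinarith [sq_nonneg (x - T/2)]
    have hineq : (x - T/2)^2 ≤ K^2 * A := by
      have : (x - T/2)^2 ≤ T^2 * A/(4*y^2) := by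
        rw [le_div_iff₀ (by positivity), hA]
        nlinarith [mul_nonneg (show (0:ℝ) ≤ 4*y^2 - T^2 by nlinarith)
          (show (0:ℝ) ≤ T^2/4 - (x - T/2)^2 by linarith)]
      calc (x - T/2)^2 ≤ T^2 * A/(4*y^2) := this
        _ = K^2 * A := by rw [hKdef]; ring
    calc |x - T/2| = Real.sqrt ((x - T/2)^2) := (Real.sqrt_sq_eq_abs _).symm
      _ ≤ Real.sqrt (K^2 * A) := Real.sqrt_le_sqrt hineq
      _ = K * Real.sqrt A := by
          rw [Real.sqrt_mul (sq_nonneg K), Real.sqrt_sq hKpos.le]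
  have key1 : |x1 - T/2| ≤ K * S1 := key x1 h1 A1 hA1def
  have key2 : |x2 - T/2| ≤ K * S2 := key x2 h2 A2 hA2def
  have hsum : 0 < S1 + S2 := by linarith
  have main : |S1 - S2| * (S1 + S2) ≤ (K * |x1 - x2|) * (S1 + S2) := by
    have e1 : |S1 - S2| * (S1 + S2) = |A1 - A2| := by
      rw [← abs_of_pos hsum, ← abs_mul]
      congr 1
      linear_combination hS1sq - hS2sq
    have e2 : |A1 - A2| = |x1 + x2 - T| * |x1 - x2| := by
      rw [← abs_mul]
      congr 1
      rw [hA1def, hA2def]; ring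
    have e3 : |x1 + x2 - T| ≤ K * S1 + K * S2 := by
      calc |x1 + x2 - T| = |(x1 - T/2) + (x2 - T/2)| := by congr 1; ring
        _ ≤ |x1 - T/2| + |x2 - T/2| := abs_add_le _ _
        _ ≤ K * S1 + K * S2 := add_le_add key1 key2
    rw [e1, e2]
    calc |x1 + x2 - T| * |x1 - x2| ≤ (K * S1 + K * S2) * |x1 - x2| :=
        mul_le_mul_of_nonneg_right e3 (abs_nonneg _)
      _ = (K * |x1 - x2|) * (S1 + S2) := by ring
  exact le_of_mul_le_mul_right main hsum

lemma hyp_lip {T y : ℝ} (hT : 0 < T) (hy : T/2 < |y|) :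
    LipschitzOnWith (T/(2*|y|)).toNNReal (hyperbolaFun T y) (Icc 0 T) := by
  apply LipschitzOnWith.of_dist_le_mul
  intro x1 h1 x2 h2
  rw [Real.dist_eq, Real.dist_eq]
  have hy0 : y ≠ 0 := by
    intro h; rw [h, abs_zero] at hy; linarith
  have habs : |Real.sign y| = 1 := by
    rcases hy0.lt_or_gt with h | h
    · simp [Real.sign_of_neg h]
    · simp [Real.sign_of_pos h]
  have e : hyperbolaFun T y x1 - hyperbolaFun T y x2
      = Real.sign y * (Real.sqrt ((x2 - T/2)^2 + y^2 - T^2/4)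
        - Real.sqrt ((x1 - T/2)^2 + y^2 - T^2/4)) := by
    simp only [hyperbolaFun]; ring
  rw [e, abs_mul, habs, one_mul]
  have hcoe : ((T/(2*|y|)).toNNReal : ℝ) = T/(2*|y|) :=
    Real.coe_toNNReal _ (by positivity)
  rw [hcoe]
  have h := sqrt_lip hT hy h2 h1
  rw [sq_abs] at h
  calc |Real.sqrt ((x2 - T/2)^2 + y^2 - T^2/4)
        - Real.sqrt ((x1 - T/2)^2 + y^2 - T^2/4)| ≤ T/(2*|y|) * |x2 - x1| := h
    _ = T/(2*|y|) * |x1 - x2| := by rw [abs_sub_comm]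

end HypAux

open HypAux in
/-- for `0 < |c| < T²/4` there is a unique `y_C` with `|y_C| ≥ T/2`
such that the hyperbola-arc `f_{y_C}` encloses area `c`; moreover `|y_C| > T/2`,
`sgn(y_C) = sgn(c)`, and `f_{y_C}` is Lipschitz of constant strictly less than 1. -/
theorem exists_unique_hyperbola (T c : ℝ) (hT : 0 < T) (hc0 : 0 < |c|)
    (hc : |c| < T^2 / 4) :
    ∃ yC : ℝ,
      (T/2 ≤ |yC| ∧ (∫ x in (0:ℝ)..T, hyperbolaFun T yC x) = c) ∧
      (∀ y : ℝ, T/2 ≤ |y| → (∫ x in (0:ℝ)..T, hyperbolaFun T y x) = c → y = yC) ∧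
      T/2 < |yC| ∧ Real.sign yC = Real.sign c ∧
      ∃ K : NNReal, (K : ℝ) < 1 ∧ LipschitzOnWith K (hyperbolaFun T yC) (Icc (0:ℝ) T) := by
  rcases (abs_pos.mp hc0).lt_or_gt with hcneg | hcpos
  · -- c < 0
    have hcabs : |c| = -c := abs_of_neg hcneg
    obtain ⟨yC', hylt, hgy, huniq⟩ := pos_case hT (by linarith : (0:ℝ) < -c)
      (by rw [hcabs] at hc; linarith)
    have hyC0 : 0 < yC' := by linarith
    have habs : |(-yC')| = yC' := by rw [abs_neg, abs_of_pos hyC0]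
    refine ⟨-yC', ⟨by rw [habs]; linarith, ?_⟩, ?_, by rw [habs]; exact hylt, ?_, ?_⟩
    · rw [integral_hyp_neg (by linarith : -yC' < 0), neg_neg, hgy]; ring
    · intro y hy hint
      have hy0 : y ≠ 0 := by
        intro h; rw [h, abs_zero] at hy; linarith
      rcases hy0.lt_or_gt with h | h
      · rw [integral_hyp_neg h] at hint
        have : g T (-y) = -c := by linarith
        have := huniq (-y) (by rw [abs_of_neg h] at hy; linarith) this
        linarith
      · exfalso
        rw [integral_hyp_pos h] at hint
        have := g_pos (y := y) hT (by rw [abs_of_pos h] at hy; exact hy)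
        linarith
    · rw [Real.sign_of_neg (by linarith : -yC' < 0), Real.sign_of_neg hcneg]
    · refine ⟨(T/(2*|(-yC')|)).toNNReal, ?_, hyp_lip hT (by rw [habs]; exact hylt)⟩
      rw [Real.coe_toNNReal _ (by positivity), habs, div_lt_one (by linarith)]
      linarith
  · -- 0 < c
    have hcabs : |c| = c := abs_of_pos hcpos
    obtain ⟨yC, hylt, hgy, huniq⟩ := pos_case hT hcpos (by rwa [hcabs] at hc)
    have hyC0 : 0 < yC := by linarith
    have habs : |yC| = yC := abs_of_pos hyC0
    refine ⟨yC, ⟨by rw [habs]; linarith, ?_⟩, ?_, by rw [habs]; exact hylt, ?_, ?_⟩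
    · rw [integral_hyp_pos hyC0]; exact hgy
    · intro y hy hint
      have hy0 : y ≠ 0 := by
        intro h; rw [h, abs_zero] at hy; linarith
      rcases hy0.lt_or_gt with h | h
      · exfalso
        rw [integral_hyp_neg h] at hint
        have := g_pos (y := -y) hT (by rw [abs_of_neg h] at hy; linarith)
        linarith
      · rw [integral_hyp_pos h] at hint
        exact huniq y (by rw [abs_of_pos h] at hy; exact hy) hint
    · rw [Real.sign_of_pos hyC0, Real.sign_of_pos hcpos]
    · refine ⟨(T/(2*|yC|)).toNNReal, ?_, hyp_lip hT (by rw [habs]; exact hylt)⟩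
      rw [Real.coe_toNNReal _ (by positivity), habs, div_lt_one (by linarith)]
      linarith
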